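/- Let M be a definably complete locally o-minimal structure with universe M. Let T ⊆ M be a definable set and b ∈ T a point such that no open interval containing b is contained in T. Then b is either an isolated point of T or an endpoint of a maximal open interval contained in T; consequently b belongs to a definable (over the same parameters as T) subset of M that is discrete and closed. -/

import Mathlib

open FirstOrder Set

namespace Paper

variable (L : FirstOrder.Language)

/-- A subset of `Mⁿ` definable with arbitrary parameters from `M`. -/
def Def (M : Type*) [L.Structure M] {n : ℕ} (s : Set (Fin n → M)) : Prop :=
  Set.Definable (Set.univ : Set M) L s

/-- A subset of `M` definable with arbitrary parameters from `M`. -/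
def Def1 (M : Type*) [L.Structure M] (s : Set M) : Prop :=
  Def L M {f : Fin 1 → M | f 0 ∈ s}

/-- A subset of `M × M` definable with arbitrary parameters from `M`. -/
def Def2 (M : Type*) [L.Structure M] (s : Set (M × M)) : Prop :=
  Def L M {f : Fin 2 → M | (f 0, f 1) ∈ s}

/-- A discrete subset of a topological space. -/
def IsDiscrete {X : Type*} [TopologicalSpace X] (s : Set X) : Prop :=
  ∀ x ∈ s, ∃ U : Set X, IsOpen U ∧ x ∈ U ∧ U ∩ s = {x}

/-- An open interval (with possibly infinite endpoints). -/
def IsOInterval {M : Type*} [Preorder M] (s : Set M) : Prop :=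
  (∃ a b : M, s = Set.Ioo a b) ∨ (∃ a, s = Set.Ioi a) ∨ (∃ b, s = Set.Iio b) ∨ s = Set.univ

/-- A finite union of points and open intervals. -/
def FinUnionPtsIntervals {M : Type*} [Preorder M] (s : Set M) : Prop :=
  ∃ (F : Finset M) (n : ℕ) (J : Fin n → Set M),
    (∀ i, IsOInterval (J i)) ∧ s = ↑F ∪ ⋃ i, J i

/-- Local o-minimality. -/
def LocallyOMinimal (M : Type*) [L.Structure M] [LinearOrder M] : Prop :=
  ∀ s : Set M, Def1 L M s → ∀ a : M,
    ∃ I : Set M, IsOInterval I ∧ a ∈ I ∧ FinUnionPtsIntervals (s ∩ I)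

/-- Definable completeness. -/
def DefinablyComplete (M : Type*) [L.Structure M] [LinearOrder M] : Prop :=
  ∀ s : Set M, Def1 L M s → s.Nonempty →
    (BddAbove s → ∃ a, IsLUB s a) ∧ (BddBelow s → ∃ a, IsGLB s a)

/-- A coordinate projection of `X ⊆ Mⁿ` to `M^d` has image with nonempty interior. -/
def HasDimWit {M : Type*} [TopologicalSpace M] {n : ℕ} (X : Set (Fin n → M)) (d : ℕ) : Prop :=
  ∃ σ : Fin d ↪ Fin n, (interior ((fun x => x ∘ σ) '' X)).Nonempty

/-- The projection dimension of a subset of `Mⁿ`, with `projDim ∅ = ⊥ = -∞`. -/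
noncomputable def projDim {M : Type*} [TopologicalSpace M] {n : ℕ}
    (X : Set (Fin n → M)) : WithBot ℕ∞ :=
  ⨆ d ∈ {d : ℕ | HasDimWit X d}, ((d : ℕ∞) : WithBot ℕ∞)

/-- The discrete closure of `A ⊆ M`. -/
def discl (M : Type*) [L.Structure M] [TopologicalSpace M] (A : Set M) : Set M :=
  {x | ∃ s : Set M, Set.Definable A L {f : Fin 1 → M | f 0 ∈ s} ∧
    IsDiscrete s ∧ IsClosed s ∧ x ∈ s}


end Paper

open Paper


namespace PaperAux

open FirstOrder FirstOrder.Language Set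

section Defin
variable {L : FirstOrder.Language} {M : Type*} [L.Structure M]

lemma cons2_one (y : M) (f : Fin 1 → M) : (Fin.cons y f : Fin 2 → M) 1 = f 0 := rfl
lemma cons3_one (y : M) (g : Fin 2 → M) : (Fin.cons y g : Fin 3 → M) 1 = g 0 := rfl
lemma cons3_two (y : M) (g : Fin 2 → M) : (Fin.cons y g : Fin 3 → M) 2 = g 1 := rfl

lemma def_coord {A : Set M} {T : Set M} (hT : Set.Definable A L {f : Fin 1 → M | f 0 ∈ T})
    {n : ℕ} (i : Fin n) : Set.Definable A L {g : Fin n → M | g i ∈ T} :=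
  hT.preimage_comp (fun _ : Fin 1 => i)

lemma def_lt [L.IsOrdered] [LinearOrder M] [L.OrderedStructure M] (A : Set M) {n : ℕ}
    (i j : Fin n) : Set.Definable A L {g : Fin n → M | g i < g j} := by
  refine Set.Definable.mono ?_ (Set.empty_subset A)
  rw [Set.empty_definable_iff]
  refine ⟨Term.lt (Term.var (Sum.inl i)) (Term.var (Sum.inl j)), ?_⟩
  ext g
  simp [Formula.Realize, Term.realize_lt]

lemma def_exists {A : Set M} {n : ℕ} {s : Set (Fin (n + 1) → M)} (h : Set.Definable A L s) :
    Set.Definable A L {g : Fin n → M | ∃ y : M, Fin.cons y g ∈ s} := by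
  have h2 := h.image_comp (Fin.succ : Fin n → Fin (n + 1))
  have he : (fun g : Fin (n + 1) → M => g ∘ Fin.succ) '' s
      = {g : Fin n → M | ∃ y : M, Fin.cons y g ∈ s} := by
    ext g
    constructor
    · rintro ⟨f, hf, rfl⟩
      refine ⟨f 0, ?_⟩
      have h3 : (Fin.cons (f 0) (f ∘ Fin.succ) : Fin (n + 1) → M) = f := Fin.cons_self_tail f
      rw [h3]; exact hf
    · rintro ⟨y, hy⟩
      exact ⟨Fin.cons y g, hy, by ext i; simp⟩
  rwa [he] at h2

lemma def_forall {A : Set M} {n : ℕ} {s : Set (Fin (n + 1) → M)} (h : Set.Definable A L s) :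
    Set.Definable A L {g : Fin n → M | ∀ y : M, Fin.cons y g ∈ s} := by
  have h2 := (def_exists h.compl).compl
  have he : {g : Fin n → M | ∃ y : M, Fin.cons y g ∈ sᶜ}ᶜ
      = {g : Fin n → M | ∀ y : M, Fin.cons y g ∈ s} := by
    ext g; simp
  rwa [he] at h2

lemma def_fiber {s : Set (Fin 2 → M)} (h : Set.Definable (Set.univ : Set M) L s) (b : M) :
    Set.Definable (Set.univ : Set M) L {f : Fin 1 → M | Fin.cons b f ∈ s} := by
  obtain ⟨φ, rfl⟩ := h
  refine ⟨φ.subst (fun i => if i = 0 then ((L.con ⟨b, Set.mem_univ b⟩).term) else Term.var 0), ?_⟩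
  ext f
  simp only [Set.mem_setOf_eq, Formula.Realize, BoundedFormula.realize_subst]
  have he : (fun a : Fin 2 => Term.realize f
      (if a = 0 then ((L.con (⟨b, Set.mem_univ b⟩ : (Set.univ : Set M))).term) else Term.var 0))
      = Fin.cons b f := by
    ext i
    fin_cases i
    · simp [Term.realize_con]
    · simp only [Fin.mk_one]
      norm_num
  rw [he]

variable [L.IsOrdered] [LinearOrder M] [L.OrderedStructure M]

lemma def_iooSub {A : Set M} {T : Set M}
    (hT : Set.Definable A L {f : Fin 1 → M | f 0 ∈ T}) {n : ℕ} (i j : Fin n) :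
    Set.Definable A L {g : Fin n → M | ∀ y, g i < y → y < g j → y ∈ T} := by
  have h3 : Set.Definable A L {h : Fin (n + 1) → M | h i.succ < h 0 → h 0 < h j.succ → h 0 ∈ T} := by
    have h4 := ((def_lt A i.succ (0 : Fin (n + 1))).compl.union
      (((def_lt A (0 : Fin (n + 1)) j.succ).compl).union (def_coord hT (0 : Fin (n + 1)))))
    have he : ({h : Fin (n + 1) → M | h i.succ < h 0}ᶜ ∪
        ({h : Fin (n + 1) → M | h 0 < h j.succ}ᶜ ∪ {h : Fin (n + 1) → M | h 0 ∈ T}))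
        = {h : Fin (n + 1) → M | h i.succ < h 0 → h 0 < h j.succ → h 0 ∈ T} := by
      ext h
      simp only [Set.mem_union, Set.mem_compl_iff, Set.mem_setOf_eq]
      tauto
    rwa [he] at h4
  have h2 := def_forall h3
  have he : {g : Fin n → M | ∀ y : M, Fin.cons y g ∈
      {h : Fin (n + 1) → M | h i.succ < h 0 → h 0 < h j.succ → h 0 ∈ T}}
      = {g : Fin n → M | ∀ y, g i < y → y < g j → y ∈ T} := by
    ext g
    simp only [Set.mem_setOf_eq, Fin.cons_succ, Fin.cons_zero]
  rwa [he] at h2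

lemma def_W {A : Set M} {T : Set M}
    (hT : Set.Definable A L {f : Fin 1 → M | f 0 ∈ T}) (i j : Fin 2) :
    Set.Definable A L {g : Fin 2 → M | g i < g j ∧ ∀ y, g i < y → y < g j → y ∈ T} :=
  (def_lt A i j).inter (def_iooSub hT i j)

lemma def_sideL {A : Set M} {T : Set M}
    (hT : Set.Definable A L {f : Fin 1 → M | f 0 ∈ T}) :
    Set.Definable A L {f : Fin 1 → M | ∃ u, u < f 0 ∧ ∀ y, u < y → y < f 0 → y ∈ T} := by
  have h := def_exists (def_W hT 0 1)
  have he : {f : Fin 1 → M | ∃ u : M, Fin.cons u f ∈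
      {g : Fin 2 → M | g 0 < g 1 ∧ ∀ y, g 0 < y → y < g 1 → y ∈ T}}
      = {f : Fin 1 → M | ∃ u, u < f 0 ∧ ∀ y, u < y → y < f 0 → y ∈ T} := by
    ext f
    simp only [Set.mem_setOf_eq, Fin.cons_zero, cons2_one]
  rwa [he] at h

lemma def_sideR {A : Set M} {T : Set M}
    (hT : Set.Definable A L {f : Fin 1 → M | f 0 ∈ T}) :
    Set.Definable A L {f : Fin 1 → M | ∃ v, f 0 < v ∧ ∀ y, f 0 < y → y < v → y ∈ T} := by
  have h := def_exists (def_W hT 1 0)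
  have he : {f : Fin 1 → M | ∃ v : M, Fin.cons v f ∈
      {g : Fin 2 → M | g 1 < g 0 ∧ ∀ y, g 1 < y → y < g 0 → y ∈ T}}
      = {f : Fin 1 → M | ∃ v, f 0 < v ∧ ∀ y, f 0 < y → y < v → y ∈ T} := by
    ext f
    simp only [Set.mem_setOf_eq, Fin.cons_zero, cons2_one]
  rwa [he] at h

lemma def_big {A : Set M} {T : Set M}
    (hT : Set.Definable A L {f : Fin 1 → M | f 0 ∈ T}) :
    Set.Definable A L {f : Fin 1 → M | ∃ v u, u < f 0 ∧ f 0 < v ∧ ∀ y, u < y → y < v → y ∈ T} := by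
  have hC3 : Set.Definable A L {h : Fin 3 → M |
      h 0 < h 2 ∧ h 2 < h 1 ∧ ∀ y, h 0 < y → y < h 1 → y ∈ T} :=
    (def_lt A 0 2).inter ((def_lt A 2 1).inter (def_iooSub hT 0 1))
  have hC2 := def_exists hC3
  have he2 : {g : Fin 2 → M | ∃ u : M, Fin.cons u g ∈ {h : Fin 3 → M |
      h 0 < h 2 ∧ h 2 < h 1 ∧ ∀ y, h 0 < y → y < h 1 → y ∈ T}}
      = {g : Fin 2 → M | ∃ u, u < g 1 ∧ g 1 < g 0 ∧ ∀ y, u < y → y < g 0 → y ∈ T} := by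
    ext g
    simp only [Set.mem_setOf_eq, Fin.cons_zero, cons3_one, cons3_two]
  rw [he2] at hC2
  have hC1 := def_exists hC2
  have he1 : {f : Fin 1 → M | ∃ v : M, Fin.cons v f ∈
      {g : Fin 2 → M | ∃ u, u < g 1 ∧ g 1 < g 0 ∧ ∀ y, u < y → y < g 0 → y ∈ T}}
      = {f : Fin 1 → M | ∃ v u, u < f 0 ∧ f 0 < v ∧ ∀ y, u < y → y < v → y ∈ T} := by
    ext f
    simp only [Set.mem_setOf_eq, Fin.cons_zero, cons2_one]
  rwa [he1] at hC1


end Defin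
section Ord
variable {M : Type*} [LinearOrder M]

lemma oint_ordConnected {s : Set M} (h : IsOInterval s) : s.OrdConnected := by
  rcases h with ⟨a, c, rfl⟩ | ⟨a, rfl⟩ | ⟨c, rfl⟩ | rfl
  exacts [Set.ordConnected_Ioo, Set.ordConnected_Ioi, Set.ordConnected_Iio, Set.ordConnected_univ]

lemma oint_isOpen [TopologicalSpace M] [OrderTopology M] {s : Set M} (h : IsOInterval s) :
    IsOpen s := by
  rcases h with ⟨a, c, rfl⟩ | ⟨a, rfl⟩ | ⟨c, rfl⟩ | rfl
  exacts [isOpen_Ioo, isOpen_Ioi, isOpen_Iio, isOpen_univ]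

lemma oint_mem [NoMaxOrder M] [NoMinOrder M] {s : Set M} (h : IsOInterval s) {x : M}
    (hx : x ∈ s) : ∃ u v, u < x ∧ x < v ∧ Set.Ioo u v ⊆ s := by
  rcases h with ⟨a, c, rfl⟩ | ⟨a, rfl⟩ | ⟨c, rfl⟩ | rfl
  · exact ⟨a, c, hx.1, hx.2, Set.Subset.rfl⟩
  · obtain ⟨v, hv⟩ := exists_gt x
    exact ⟨a, v, hx, hv, fun y hy => hy.1⟩
  · obtain ⟨u, hu⟩ := exists_lt x
    exact ⟨u, c, hu, hx, fun y hy => hy.2⟩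
  · obtain ⟨v, hv⟩ := exists_gt x
    obtain ⟨u, hu⟩ := exists_lt x
    exact ⟨u, v, hu, hv, fun _ _ => trivial⟩
lemma piece_left [NoMinOrder M] {s : Set M} (h : IsOInterval s) (b : M) :
    ∃ a, a < b ∧ (Set.Ioo a b ⊆ s ∨ Set.Ioo a b ∩ s = ∅) := by
  rcases h with ⟨u, v, rfl⟩ | ⟨u, rfl⟩ | ⟨v, rfl⟩ | rfl
  · rcases lt_or_ge v b with hvb | hbv
    · refine ⟨v, hvb, Or.inr ?_⟩
      rw [Set.eq_empty_iff_forall_notMem]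
      rintro y ⟨⟨h1, _⟩, ⟨_, h4⟩⟩
      exact lt_irrefl v (h1.trans h4)
    · rcases lt_or_ge u b with hub | hbu
      · exact ⟨u, hub, Or.inl fun y hy => ⟨hy.1, lt_of_lt_of_le hy.2 hbv⟩⟩
      · obtain ⟨a, ha⟩ := exists_lt b
        refine ⟨a, ha, Or.inr ?_⟩
        rw [Set.eq_empty_iff_forall_notMem]
        rintro y ⟨⟨_, h2⟩, ⟨h3, _⟩⟩
        exact lt_asymm h3 (h2.trans_le hbu)
  · rcases lt_or_ge u b with hub | hbu
    · exact ⟨u, hub, Or.inl fun y hy => Set.mem_Ioi.2 hy.1⟩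
    · obtain ⟨a, ha⟩ := exists_lt b
      refine ⟨a, ha, Or.inr ?_⟩
      rw [Set.eq_empty_iff_forall_notMem]
      rintro y ⟨⟨_, h2⟩, h3⟩
      exact lt_asymm (Set.mem_Ioi.1 h3) (h2.trans_le hbu)
  · rcases le_or_gt b v with hbv | hvb
    · obtain ⟨a, ha⟩ := exists_lt b
      exact ⟨a, ha, Or.inl fun y hy => Set.mem_Iio.2 (lt_of_lt_of_le hy.2 hbv)⟩
    · refine ⟨v, hvb, Or.inr ?_⟩
      rw [Set.eq_empty_iff_forall_notMem]
      rintro y ⟨⟨h1, _⟩, h3⟩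
      exact lt_asymm h1 (Set.mem_Iio.1 h3)
  · obtain ⟨a, ha⟩ := exists_lt b
    exact ⟨a, ha, Or.inl fun y _ => trivial⟩

lemma piece_right [NoMaxOrder M] {s : Set M} (h : IsOInterval s) (b : M) :
    ∃ a, b < a ∧ (Set.Ioo b a ⊆ s ∨ Set.Ioo b a ∩ s = ∅) := by
  rcases h with ⟨u, v, rfl⟩ | ⟨u, rfl⟩ | ⟨v, rfl⟩ | rfl
  · rcases lt_or_ge b u with hbu | hub
    · refine ⟨u, hbu, Or.inr ?_⟩
      rw [Set.eq_empty_iff_forall_notMem]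
      rintro y ⟨⟨_, h2⟩, ⟨h3, _⟩⟩
      exact lt_irrefl u (h3.trans h2)
    · rcases lt_or_ge b v with hbv | hvb
      · exact ⟨v, hbv, Or.inl fun y hy => ⟨lt_of_le_of_lt hub hy.1, hy.2⟩⟩
      · obtain ⟨a, ha⟩ := exists_gt b
        refine ⟨a, ha, Or.inr ?_⟩
        rw [Set.eq_empty_iff_forall_notMem]
        rintro y ⟨⟨h1, _⟩, ⟨_, h4⟩⟩
        exact lt_asymm h4 (hvb.trans_lt h1)
  · rcases le_or_gt u b with hub | hbu
    · obtain ⟨a, ha⟩ := exists_gt b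
      exact ⟨a, ha, Or.inl fun y hy => Set.mem_Ioi.2 (lt_of_le_of_lt hub hy.1)⟩
    · refine ⟨u, hbu, Or.inr ?_⟩
      rw [Set.eq_empty_iff_forall_notMem]
      rintro y ⟨⟨_, h2⟩, h3⟩
      exact lt_asymm h2 (Set.mem_Ioi.1 h3)
  · rcases lt_or_ge b v with hbv | hvb
    · exact ⟨v, hbv, Or.inl fun y hy => Set.mem_Iio.2 hy.2⟩
    · obtain ⟨a, ha⟩ := exists_gt b
      refine ⟨a, ha, Or.inr ?_⟩
      rw [Set.eq_empty_iff_forall_notMem]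
      rintro y ⟨⟨h1, _⟩, h3⟩
      exact lt_asymm (Set.mem_Iio.1 h3) (hvb.trans_lt h1)
  · obtain ⟨a, ha⟩ := exists_gt b
    exact ⟨a, ha, Or.inl fun y _ => trivial⟩

lemma avoid_left [NoMinOrder M] (F : Finset M) (b : M) :
    ∃ a, a < b ∧ Set.Ioo a b ∩ ↑F = ∅ := by
  classical
  by_cases hne : (F.filter (· < b)).Nonempty
  · refine ⟨(F.filter (· < b)).max' hne,
      (Finset.mem_filter.1 ((F.filter (· < b)).max'_mem hne)).2, ?_⟩
    rw [Set.eq_empty_iff_forall_notMem]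
    rintro y ⟨⟨h1, h2⟩, h3⟩
    exact absurd (Finset.le_max' (F.filter (· < b)) y (Finset.mem_filter.2 ⟨Finset.mem_coe.1 h3, h2⟩)) (not_le.2 h1)
  · obtain ⟨a, ha⟩ := exists_lt b
    refine ⟨a, ha, ?_⟩
    rw [Set.eq_empty_iff_forall_notMem]
    rintro y ⟨⟨h1, h2⟩, h3⟩
    exact hne ⟨y, Finset.mem_filter.2 ⟨Finset.mem_coe.1 h3, h2⟩⟩

lemma avoid_right [NoMaxOrder M] (F : Finset M) (b : M) :
    ∃ a, b < a ∧ Set.Ioo b a ∩ ↑F = ∅ := by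
  classical
  by_cases hne : (F.filter (b < ·)).Nonempty
  · refine ⟨(F.filter (b < ·)).min' hne,
      (Finset.mem_filter.1 ((F.filter (b < ·)).min'_mem hne)).2, ?_⟩
    rw [Set.eq_empty_iff_forall_notMem]
    rintro y ⟨⟨h1, h2⟩, h3⟩
    exact absurd (Finset.min'_le (F.filter (b < ·)) y (Finset.mem_filter.2 ⟨Finset.mem_coe.1 h3, h1⟩)) (not_le.2 h2)
  · obtain ⟨a, ha⟩ := exists_gt b
    refine ⟨a, ha, ?_⟩
    rw [Set.eq_empty_iff_forall_notMem]
    rintro y ⟨⟨h1, h2⟩, h3⟩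
    exact hne ⟨y, Finset.mem_filter.2 ⟨Finset.mem_coe.1 h3, h1⟩⟩

variable {L : FirstOrder.Language} [L.Structure M]

lemma left_tri [NoMaxOrder M] [NoMinOrder M] (hlo : LocallyOMinimal L M) (T : Set M)
    (hTd : Def1 L M T) (b : M) :
    (∃ a, a < b ∧ Set.Ioo a b ⊆ T) ∨ (∃ a, a < b ∧ Set.Ioo a b ∩ T = ∅) := by
  classical
  obtain ⟨I, hI, hbI, F, n, J, hJ, hEq⟩ := hlo T hTd b
  obtain ⟨u0, v0, hu0, hv0, hI0⟩ := oint_mem hI hbI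
  have hTI : (↑F ∪ ⋃ i, J i : Set M) ⊆ T := by
    rw [← hEq]; exact Set.inter_subset_left
  by_cases hsub : ∃ i a, a < b ∧ Set.Ioo a b ⊆ J i
  · obtain ⟨i, a, hab, hsubJ⟩ := hsub
    exact Or.inl ⟨a, hab, fun y hy => hTI (Set.mem_union_right _ (Set.mem_iUnion.2 ⟨i, hsubJ hy⟩))⟩
  · push_neg at hsub
    choose g hg1 hg2 using fun i => piece_left (hJ i) b
    have hg3 : ∀ i, Set.Ioo (g i) b ∩ J i = ∅ := fun i =>
      (hg2 i).resolve_left (hsub i (g i) (hg1 i))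
    obtain ⟨aF, haF, hFd⟩ := avoid_left F b
    set s : Finset M := insert u0 (insert aF (Finset.image g Finset.univ)) with hs
    have hne : s.Nonempty := ⟨u0, by simp [s]⟩
    have hab : s.max' hne < b := by
      rw [Finset.max'_lt_iff]
      intro y hy
      simp only [s, Finset.mem_insert, Finset.mem_image, Finset.mem_univ, true_and] at hy
      rcases hy with rfl | rfl | ⟨i, rfl⟩
      exacts [hu0, haF, hg1 i]
    refine Or.inr ⟨s.max' hne, hab, ?_⟩
    ext y
    simp only [Set.mem_inter_iff, Set.mem_Ioo, Set.mem_empty_iff_false, iff_false, not_and]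
    rintro ⟨hay, hyb⟩ hyT
    have hyI : y ∈ I := hI0 ⟨lt_of_le_of_lt (Finset.le_max' s u0 (by simp [s])) hay, hyb.trans hv0⟩
    have hy2 : y ∈ (↑F ∪ ⋃ i, J i : Set M) := by rw [← hEq]; exact ⟨hyT, hyI⟩
    rcases hy2 with hyF | hyJ
    · have : y ∈ Set.Ioo aF b ∩ ↑F :=
        ⟨⟨lt_of_le_of_lt (Finset.le_max' s aF (by simp [s])) hay, hyb⟩, hyF⟩
      rw [hFd] at this
      exact this
    · obtain ⟨i, hyi⟩ := Set.mem_iUnion.1 hyJ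
      have : y ∈ Set.Ioo (g i) b ∩ J i :=
        ⟨⟨lt_of_le_of_lt (Finset.le_max' s (g i) (by simp [s])) hay, hyb⟩, hyi⟩
      rw [hg3 i] at this
      exact this

lemma right_tri [NoMaxOrder M] [NoMinOrder M] (hlo : LocallyOMinimal L M) (T : Set M)
    (hTd : Def1 L M T) (b : M) :
    (∃ a, b < a ∧ Set.Ioo b a ⊆ T) ∨ (∃ a, b < a ∧ Set.Ioo b a ∩ T = ∅) := by
  classical
  obtain ⟨I, hI, hbI, F, n, J, hJ, hEq⟩ := hlo T hTd b
  obtain ⟨u0, v0, hu0, hv0, hI0⟩ := oint_mem hI hbI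
  have hTI : (↑F ∪ ⋃ i, J i : Set M) ⊆ T := by
    rw [← hEq]; exact Set.inter_subset_left
  by_cases hsub : ∃ i a, b < a ∧ Set.Ioo b a ⊆ J i
  · obtain ⟨i, a, hab, hsubJ⟩ := hsub
    exact Or.inl ⟨a, hab, fun y hy => hTI (Set.mem_union_right _ (Set.mem_iUnion.2 ⟨i, hsubJ hy⟩))⟩
  · push_neg at hsub
    choose g hg1 hg2 using fun i => piece_right (hJ i) b
    have hg3 : ∀ i, Set.Ioo b (g i) ∩ J i = ∅ := fun i =>
      (hg2 i).resolve_left (hsub i (g i) (hg1 i))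
    obtain ⟨aF, haF, hFd⟩ := avoid_right F b
    set s : Finset M := insert v0 (insert aF (Finset.image g Finset.univ)) with hs
    have hne : s.Nonempty := ⟨v0, by simp [s]⟩
    have hab : b < s.min' hne := by
      rw [Finset.lt_min'_iff]
      intro y hy
      simp only [s, Finset.mem_insert, Finset.mem_image, Finset.mem_univ, true_and] at hy
      rcases hy with rfl | rfl | ⟨i, rfl⟩
      exacts [hv0, haF, hg1 i]
    refine Or.inr ⟨s.min' hne, hab, ?_⟩
    ext y
    simp only [Set.mem_inter_iff, Set.mem_Ioo, Set.mem_empty_iff_false, iff_false, not_and]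
    rintro ⟨hby, hya⟩ hyT
    have hyI : y ∈ I := hI0 ⟨hu0.trans hby, lt_of_lt_of_le hya (Finset.min'_le s v0 (by simp [s]))⟩
    have hy2 : y ∈ (↑F ∪ ⋃ i, J i : Set M) := by rw [← hEq]; exact ⟨hyT, hyI⟩
    rcases hy2 with hyF | hyJ
    · have : y ∈ Set.Ioo b aF ∩ ↑F :=
        ⟨⟨hby, lt_of_lt_of_le hya (Finset.min'_le s aF (by simp [s]))⟩, hyF⟩
      rw [hFd] at this
      exact this
    · obtain ⟨i, hyi⟩ := Set.mem_iUnion.1 hyJ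
      have : y ∈ Set.Ioo b (g i) ∩ J i :=
        ⟨⟨hby, lt_of_lt_of_le hya (Finset.min'_le s (g i) (by simp [s]))⟩, hyi⟩
      rw [hg3 i] at this
      exact this

lemma max_left [DenselyOrdered M] [NoMaxOrder M] [NoMinOrder M]
    [TopologicalSpace M] [OrderTopology M]
    (hdc : DefinablyComplete L M) (T : Set M) (b : M)
    (hD : Def1 L M {x : M | x < b ∧ Set.Ioo x b ⊆ T})
    (hnoint : ¬ ∃ u v, u < b ∧ b < v ∧ Set.Ioo u v ⊆ T)
    (a : M) (hab : a < b) (haT : Set.Ioo a b ⊆ T) :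
    ∃ I : Set M, IsOInterval I ∧ I ⊆ T ∧
      (∀ J : Set M, IsOInterval J → I ⊆ J → J ⊆ T → J = I) ∧ IsLUB I b := by
  set D := {x : M | x < b ∧ Set.Ioo x b ⊆ T} with hDdef
  have haD : a ∈ D := ⟨hab, haT⟩
  have hbnot : ∀ J : Set M, IsOInterval J → J ⊆ T → b ∉ J := by
    intro J hJ hJT hbJ
    obtain ⟨u, v, h1, h2, h3⟩ := oint_mem hJ hbJ
    exact hnoint ⟨u, v, h1, h2, h3.trans hJT⟩
  by_cases hbdd : BddBelow D
  · obtain ⟨c, hc⟩ := (hdc D hD ⟨a, haD⟩).2 hbdd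
    have hcb : c < b := lt_of_le_of_lt (hc.1 haD) hab
    have hsub : Set.Ioo c b ⊆ T := by
      rintro y ⟨hcy, hyb⟩
      have : ¬ y ∈ lowerBounds D := fun h => absurd (hc.2 h) (not_le.2 hcy)
      rw [lowerBounds, Set.mem_setOf_eq] at this
      push_neg at this
      obtain ⟨x, hxD, hxy⟩ := this
      exact hxD.2 ⟨hxy, hyb⟩
    refine ⟨Set.Ioo c b, Or.inl ⟨c, b, rfl⟩, hsub, ?_, isLUB_Ioo hcb⟩
    intro J hJ hIJ hJT
    have hOC := oint_ordConnected hJ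
    obtain ⟨z0, hcz0, hz0b⟩ := exists_between hcb
    have hz0J : z0 ∈ J := hIJ ⟨hcz0, hz0b⟩
    refine Set.Subset.antisymm ?_ hIJ
    intro x hxJ
    have hxb : x < b := by
      rcases lt_or_ge x b with h | h
      · exact h
      · exact absurd (hOC.out hz0J hxJ ⟨le_of_lt hz0b, h⟩) (hbnot J hJ hJT)
    have hcx : c < x := by
      rcases lt_or_ge c x with h | h
      · exact h
      · exfalso
        have hxD : x ∈ D := by
          refine ⟨hxb, ?_⟩
          rintro y ⟨hxy, hyb⟩
          rcases lt_or_ge c y with hcy | hyc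
          · exact hJT (hIJ ⟨hcy, hyb⟩)
          · obtain ⟨z, hcz, hzb⟩ := exists_between hcb
            exact hJT (hOC.out hxJ (hIJ ⟨hcz, hzb⟩) ⟨le_of_lt hxy, hyc.trans (le_of_lt hcz)⟩)
        have hxc : x = c := le_antisymm h (hc.1 hxD)
        subst hxc
        have hJn : J ∈ nhds x := (oint_isOpen hJ).mem_nhds hxJ
        obtain ⟨l, u, hlu, hluJ⟩ := mem_nhds_iff_exists_Ioo_subset.1 hJn
        obtain ⟨w, hlw, hwx⟩ := exists_between hlu.1
        have hwD : w ∈ D := by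
          refine ⟨hwx.trans hxb, ?_⟩
          rintro y ⟨hwy, hyb⟩
          rcases lt_or_ge x y with hxy | hyx
          · exact hsub ⟨hxy, hyb⟩
          · refine hJT (hOC.out (hluJ ⟨hlw, hwx.trans hlu.2⟩) hz0J ⟨le_of_lt hwy, ?_⟩)
            exact hyx.trans (le_of_lt hcz0)
        exact absurd (hc.1 hwD) (not_le.2 hwx)
    exact ⟨hcx, hxb⟩
  · have hsub : Set.Iio b ⊆ T := by
      intro y hy
      obtain ⟨x, hxD, hxy⟩ := not_bddBelow_iff.1 hbdd y
      exact hxD.2 ⟨hxy, Set.mem_Iio.1 hy⟩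
    refine ⟨Set.Iio b, Or.inr (Or.inr (Or.inl ⟨b, rfl⟩)), hsub, ?_, isLUB_Iio⟩
    intro J hJ hIJ hJT
    have hOC := oint_ordConnected hJ
    refine Set.Subset.antisymm ?_ hIJ
    intro x hxJ
    rcases lt_or_ge x b with h | h
    · exact h
    · exfalso
      obtain ⟨y, hy⟩ := exists_lt b
      exact hbnot J hJ hJT (hOC.out (hIJ (Set.mem_Iio.2 hy)) hxJ ⟨le_of_lt hy, h⟩)

lemma max_right [DenselyOrdered M] [NoMaxOrder M] [NoMinOrder M]
    [TopologicalSpace M] [OrderTopology M]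
    (hdc : DefinablyComplete L M) (T : Set M) (b : M)
    (hD : Def1 L M {x : M | b < x ∧ Set.Ioo b x ⊆ T})
    (hnoint : ¬ ∃ u v, u < b ∧ b < v ∧ Set.Ioo u v ⊆ T)
    (a : M) (hab : b < a) (haT : Set.Ioo b a ⊆ T) :
    ∃ I : Set M, IsOInterval I ∧ I ⊆ T ∧
      (∀ J : Set M, IsOInterval J → I ⊆ J → J ⊆ T → J = I) ∧ IsGLB I b := by
  set D := {x : M | b < x ∧ Set.Ioo b x ⊆ T} with hDdef
  have haD : a ∈ D := ⟨hab, haT⟩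
  have hbnot : ∀ J : Set M, IsOInterval J → J ⊆ T → b ∉ J := by
    intro J hJ hJT hbJ
    obtain ⟨u, v, h1, h2, h3⟩ := oint_mem hJ hbJ
    exact hnoint ⟨u, v, h1, h2, h3.trans hJT⟩
  by_cases hbdd : BddAbove D
  · obtain ⟨c, hc⟩ := (hdc D hD ⟨a, haD⟩).1 hbdd
    have hcb : b < c := lt_of_lt_of_le hab (hc.1 haD)
    have hsub : Set.Ioo b c ⊆ T := by
      rintro y ⟨hby, hyc⟩
      have : ¬ y ∈ upperBounds D := fun h => absurd (hc.2 h) (not_le.2 hyc)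
      rw [upperBounds, Set.mem_setOf_eq] at this
      push_neg at this
      obtain ⟨x, hxD, hxy⟩ := this
      exact hxD.2 ⟨hby, hxy⟩
    refine ⟨Set.Ioo b c, Or.inl ⟨b, c, rfl⟩, hsub, ?_, isGLB_Ioo hcb⟩
    intro J hJ hIJ hJT
    have hOC := oint_ordConnected hJ
    obtain ⟨z0, hbz0, hz0c⟩ := exists_between hcb
    have hz0J : z0 ∈ J := hIJ ⟨hbz0, hz0c⟩
    refine Set.Subset.antisymm ?_ hIJ
    intro x hxJ
    have hxb : b < x := by
      rcases lt_or_ge b x with h | h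
      · exact h
      · exact absurd (hOC.out hxJ hz0J ⟨h, le_of_lt hbz0⟩) (hbnot J hJ hJT)
    have hcx : x < c := by
      rcases lt_or_ge x c with h | h
      · exact h
      · exfalso
        have hxD : x ∈ D := by
          refine ⟨hxb, ?_⟩
          rintro y ⟨hby, hyx⟩
          rcases lt_or_ge y c with hyc | hcy
          · exact hJT (hIJ ⟨hby, hyc⟩)
          · obtain ⟨z, hbz, hzc⟩ := exists_between hcb
            exact hJT (hOC.out (hIJ ⟨hbz, hzc⟩) hxJ ⟨(le_of_lt hzc).trans hcy, le_of_lt hyx⟩)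
        have hxc : x = c := le_antisymm (hc.1 hxD) h
        subst hxc
        have hJn : J ∈ nhds x := (oint_isOpen hJ).mem_nhds hxJ
        obtain ⟨l, u, hlu, hluJ⟩ := mem_nhds_iff_exists_Ioo_subset.1 hJn
        obtain ⟨w, hxw, hwu⟩ := exists_between hlu.2
        have hwD : w ∈ D := by
          refine ⟨hxb.trans hxw, ?_⟩
          rintro y ⟨hby, hyw⟩
          rcases lt_or_ge y x with hyx | hxy
          · exact hsub ⟨hby, hyx⟩
          · refine hJT (hOC.out hz0J (hluJ ⟨hlu.1.trans hxw, hwu⟩) ⟨?_, le_of_lt hyw⟩)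
            exact (le_of_lt hz0c).trans hxy
        exact absurd (hc.1 hwD) (not_le.2 hxw)
    exact ⟨hxb, hcx⟩
  · have hsub : Set.Ioi b ⊆ T := by
      intro y hy
      obtain ⟨x, hxD, hxy⟩ := not_bddAbove_iff.1 hbdd y
      exact hxD.2 ⟨Set.mem_Ioi.1 hy, hxy⟩
    refine ⟨Set.Ioi b, Or.inr (Or.inl ⟨b, rfl⟩), hsub, ?_, isGLB_Ioi⟩
    intro J hJ hIJ hJT
    have hOC := oint_ordConnected hJ
    refine Set.Subset.antisymm ?_ hIJ
    intro x hxJ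
    rcases lt_or_ge b x with h | h
    · exact h
    · exfalso
      obtain ⟨y, hy⟩ := exists_gt b
      exact hbnot J hJ hJT (hOC.out hxJ (hIJ (Set.mem_Ioi.2 hy)) ⟨h, le_of_lt hy⟩)
end Ord
end PaperAux

open PaperAux

/-- In a definably complete locally o-minimal structure, if `T` is a definable set (over a
parameter set `A`) and `b ∈ T` is a point such that no open interval containing `b` is
contained in `T`, then `b` is either an isolated point of `T` or an endpoint of a maximal
open interval contained in `T`; consequently `b` belongs to an `A`-definable discrete
closed subset of `M`. -/
theorem isolated_or_endpoint_and_mem_discrete_closed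
    {L : FirstOrder.Language} {M : Type*} [L.IsOrdered] [LinearOrder M] [L.Structure M]
    [L.OrderedStructure M] [DenselyOrdered M] [NoMaxOrder M] [NoMinOrder M]
    [TopologicalSpace M] [OrderTopology M]
    (hlo : LocallyOMinimal L M) (hdc : DefinablyComplete L M)
    (A : Set M) (T : Set M) (hT : Set.Definable A L {f : Fin 1 → M | f 0 ∈ T})
    (b : M) (hb : b ∈ T)
    (hnoint : ¬ ∃ I : Set M, IsOInterval I ∧ b ∈ I ∧ I ⊆ T) :
    ((∃ I : Set M, IsOInterval I ∧ b ∈ I ∧ I ∩ T = {b}) ∨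
      (∃ I : Set M, IsOInterval I ∧ I ⊆ T ∧
        (∀ J : Set M, IsOInterval J → I ⊆ J → J ⊆ T → J = I) ∧
        (IsLUB I b ∨ IsGLB I b))) ∧
    ∃ S : Set M, Set.Definable A L {f : Fin 1 → M | f 0 ∈ S} ∧
      Paper.IsDiscrete S ∧ IsClosed S ∧ b ∈ S := by
  classical
  have hTu : Def1 L M T := hT.mono (Set.subset_univ A)
  have hnoint' : ¬ ∃ u v : M, u < b ∧ b < v ∧ Set.Ioo u v ⊆ T := by
    rintro ⟨u, v, h1, h2, h3⟩
    exact hnoint ⟨Set.Ioo u v, Or.inl ⟨u, v, rfl⟩, ⟨h1, h2⟩, h3⟩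
  constructor
  · -- Part 1: isolated or endpoint of maximal interval
    have hDl : Def1 L M {x : M | x < b ∧ Set.Ioo x b ⊆ T} := by
      have h := def_fiber ((def_W hT 1 0).mono (Set.subset_univ A)) b
      have he : {f : Fin 1 → M | Fin.cons b f ∈
          {g : Fin 2 → M | g 1 < g 0 ∧ ∀ y, g 1 < y → y < g 0 → y ∈ T}}
          = {f : Fin 1 → M | f 0 ∈ {x : M | x < b ∧ Set.Ioo x b ⊆ T}} := by
        ext f
        simp only [Set.mem_setOf_eq, Fin.cons_zero, cons2_one]
        constructor
        · rintro ⟨h1, h2⟩; exact ⟨h1, fun y hy => h2 y hy.1 hy.2⟩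
        · rintro ⟨h1, h2⟩; exact ⟨h1, fun y hy1 hy2 => h2 ⟨hy1, hy2⟩⟩
      rw [he] at h
      exact h
    have hDr : Def1 L M {x : M | b < x ∧ Set.Ioo b x ⊆ T} := by
      have h := def_fiber ((def_W hT 0 1).mono (Set.subset_univ A)) b
      have he : {f : Fin 1 → M | Fin.cons b f ∈
          {g : Fin 2 → M | g 0 < g 1 ∧ ∀ y, g 0 < y → y < g 1 → y ∈ T}}
          = {f : Fin 1 → M | f 0 ∈ {x : M | b < x ∧ Set.Ioo b x ⊆ T}} := by
        ext f
        simp only [Set.mem_setOf_eq, Fin.cons_zero, cons2_one]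
        constructor
        · rintro ⟨h1, h2⟩; exact ⟨h1, fun y hy => h2 y hy.1 hy.2⟩
        · rintro ⟨h1, h2⟩; exact ⟨h1, fun y hy1 hy2 => h2 ⟨hy1, hy2⟩⟩
      rw [he] at h
      exact h
    rcases left_tri hlo T hTu b with ⟨a, h1, h2⟩ | ⟨a, h1, h2⟩
    · obtain ⟨I, hI1, hI2, hI3, hI4⟩ := max_left hdc T b hDl hnoint' a h1 h2
      exact Or.inr ⟨I, hI1, hI2, hI3, Or.inl hI4⟩
    · rcases right_tri hlo T hTu b with ⟨a', h1', h2'⟩ | ⟨a', h1', h2'⟩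
      · obtain ⟨I, hI1, hI2, hI3, hI4⟩ := max_right hdc T b hDr hnoint' a' h1' h2'
        exact Or.inr ⟨I, hI1, hI2, hI3, Or.inr hI4⟩
      · refine Or.inl ⟨Set.Ioo a a', Or.inl ⟨a, a', rfl⟩, ⟨h1, h1'⟩, ?_⟩
        ext z
        rw [Set.mem_singleton_iff]
        constructor
        · rintro ⟨⟨hz1, hz2⟩, hzT⟩
          rcases lt_trichotomy z b with hzb | rfl | hbz
          · have hcon : z ∈ Set.Ioo a b ∩ T := ⟨⟨hz1, hzb⟩, hzT⟩
            rw [h2] at hcon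
            exact absurd hcon (Set.notMem_empty z)
          · rfl
          · have hcon : z ∈ Set.Ioo b a' ∩ T := ⟨⟨hbz, hz2⟩, hzT⟩
            rw [h2'] at hcon
            exact absurd hcon (Set.notMem_empty z)
        · rintro rfl
          exact ⟨⟨h1, h1'⟩, hb⟩
  · -- Part 2: the definable discrete closed set
    set S : Set M := {x : M | ¬ (∃ v u : M, u < x ∧ x < v ∧ ∀ y, u < y → y < v → y ∈ T) ∧
        (x ∈ T ∨ (∃ u, u < x ∧ ∀ y, u < y → y < x → y ∈ T) ∨
          (∃ v, x < v ∧ ∀ y, x < y → y < v → y ∈ T))} with hS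
    have hSdef : Set.Definable A L {f : Fin 1 → M | f 0 ∈ S} := by
      have h := ((def_big hT).compl).inter (hT.union ((def_sideL hT).union (def_sideR hT)))
      have he : ({f : Fin 1 → M | ∃ v u : M, u < f 0 ∧ f 0 < v ∧
            ∀ y, u < y → y < v → y ∈ T}ᶜ ∩
          ({f : Fin 1 → M | f 0 ∈ T} ∪
            ({f : Fin 1 → M | ∃ u, u < f 0 ∧ ∀ y, u < y → y < f 0 → y ∈ T} ∪
              {f : Fin 1 → M | ∃ v, f 0 < v ∧ ∀ y, f 0 < y → y < v → y ∈ T})))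
          = {f : Fin 1 → M | f 0 ∈ S} := by
        ext f
        simp only [hS, Set.mem_inter_iff, Set.mem_compl_iff, Set.mem_union, Set.mem_setOf_eq]
      rw [he] at h
      exact h
    have hSu : Def1 L M S := hSdef.mono (Set.subset_univ A)
    have noOpen : ∀ u v : M, u < v → ¬ (Set.Ioo u v ⊆ S) := by
      intro u v huv hsub
      obtain ⟨x, hx⟩ := Set.nonempty_Ioo.2 huv
      have key : ∀ y, y ∈ Set.Ioo u v → ∀ p q : M, p < y → y < q →
          (∀ z, p < z → z < q → z ∈ T) → False := by
        intro y hy p q hpy hyq hpq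
        exact (hsub hy).1 ⟨q, p, hpy, hyq, hpq⟩
      by_cases hR : ∃ w, x < w ∧ ∀ z, x < z → z < w → z ∈ T
      · obtain ⟨w, hxw, hwT⟩ := hR
        obtain ⟨y, hxy, hy2⟩ := exists_between (lt_min hxw hx.2)
        exact key y ⟨hx.1.trans hxy, lt_of_lt_of_le hy2 (min_le_right _ _)⟩ x w hxy
          (lt_of_lt_of_le hy2 (min_le_left _ _)) hwT
      by_cases hLft : ∃ w, w < x ∧ ∀ z, w < z → z < x → z ∈ T
      · obtain ⟨w, hwx, hwT⟩ := hLft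
        obtain ⟨y, hy1, hyx⟩ := exists_between (max_lt hwx hx.1)
        exact key y ⟨lt_of_le_of_lt (le_max_right w u) hy1, hyx.trans hx.2⟩ w x
          (lt_of_le_of_lt (le_max_left w u) hy1) hyx hwT
      have hxT : x ∈ T := by
        rcases (hsub hx).2 with h | h | h
        · exact h
        · exact absurd h hLft
        · exact absurd h hR
      rcases left_tri hlo T hTu x with ⟨p, hpx, hpT⟩ | ⟨p, hpx, hpT⟩
      · exact hLft ⟨p, hpx, fun z hz1 hz2 => hpT ⟨hz1, hz2⟩⟩
      rcases right_tri hlo T hTu x with ⟨q, hxq, hqT⟩ | ⟨q, hxq, hqT⟩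
      · exact hR ⟨q, hxq, fun z hz1 hz2 => hqT ⟨hz1, hz2⟩⟩
      obtain ⟨y, hxy, hy2⟩ := exists_between (lt_min hx.2 hxq)
      have hyv : y < v := lt_of_lt_of_le hy2 (min_le_left _ _)
      have hyq : y < q := lt_of_lt_of_le hy2 (min_le_right _ _)
      have hyuv : y ∈ Set.Ioo u v := ⟨hx.1.trans hxy, hyv⟩
      have hynT : y ∉ T := by
        intro h
        have hcon : y ∈ Set.Ioo x q ∩ T := ⟨⟨hxy, hyq⟩, h⟩
        rw [hqT] at hcon
        exact hcon
      rcases (hsub hyuv).2 with h | ⟨w, hwy, hwT⟩ | ⟨w, hyw, hwT⟩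
      · exact hynT h
      · obtain ⟨z, hz1, hz2⟩ := exists_between (max_lt hwy hxy)
        have hcon : z ∈ Set.Ioo x q ∩ T := ⟨⟨lt_of_le_of_lt (le_max_right w x) hz1,
          hz2.trans hyq⟩, hwT z (lt_of_le_of_lt (le_max_left w x) hz1) hz2⟩
        rw [hqT] at hcon
        exact hcon
      · obtain ⟨z, hz1, hz2⟩ := exists_between (lt_min hyw hyq)
        have hcon : z ∈ Set.Ioo x q ∩ T := ⟨⟨hxy.trans hz1,
          lt_of_lt_of_le hz2 (min_le_right _ _)⟩,
          hwT z hz1 (lt_of_lt_of_le hz2 (min_le_left _ _))⟩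
        rw [hqT] at hcon
        exact hcon
    have hkey : ∀ x : M, ∃ U : Set M, IsOpen U ∧ x ∈ U ∧ U ∩ S ⊆ {x} := by
      intro x
      obtain ⟨I, hI, hxI, F, n, J, hJ, hEq⟩ := hlo S hSu x
      have hJe : ∀ i, J i = ∅ := by
        intro i
        rw [Set.eq_empty_iff_forall_notMem]
        intro z hz
        obtain ⟨u, v, hu, hv, huv⟩ := oint_mem (hJ i) hz
        refine noOpen u v (hu.trans hv) ?_
        intro y hy
        have hyS : y ∈ S ∩ I := by
          rw [hEq]
          exact Or.inr (Set.mem_iUnion.2 ⟨i, huv hy⟩)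
        exact hyS.1
      have hSF : S ∩ I ⊆ ↑F := by
        intro y hy
        rw [hEq] at hy
        rcases hy with h | h
        · exact h
        · obtain ⟨i, hi⟩ := Set.mem_iUnion.1 h
          rw [hJe i] at hi
          exact absurd hi (Set.notMem_empty y)
      obtain ⟨u, hux, hu⟩ := avoid_left (F.erase x) x
      obtain ⟨v, hxv, hv⟩ := avoid_right (F.erase x) x
      refine ⟨I ∩ Set.Ioo u v, (oint_isOpen hI).inter isOpen_Ioo, ⟨hxI, hux, hxv⟩, ?_⟩
      rintro z ⟨⟨hzI, hzuv⟩, hzS⟩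
      have hzF : z ∈ F := Finset.mem_coe.1 (hSF ⟨hzS, hzI⟩)
      by_contra hzx
      have hze : z ∈ (F.erase x : Finset M) := Finset.mem_erase.2 ⟨hzx, hzF⟩
      rcases lt_trichotomy z x with h | h | h
      · have hcon : z ∈ Set.Ioo u x ∩ ↑(F.erase x) := ⟨⟨hzuv.1, h⟩, Finset.mem_coe.2 hze⟩
        rw [hu] at hcon
        exact hcon
      · exact hzx h
      · have hcon : z ∈ Set.Ioo x v ∩ ↑(F.erase x) := ⟨⟨h, hzuv.2⟩, Finset.mem_coe.2 hze⟩
        rw [hv] at hcon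
        exact hcon
    refine ⟨S, hSdef, ?_, ?_, ?_⟩
    · intro x hx
      obtain ⟨U, hUo, hxU, hUS⟩ := hkey x
      exact ⟨U, hUo, hxU, Set.Subset.antisymm hUS (Set.singleton_subset_iff.2 ⟨hxU, hx⟩)⟩
    · rw [← isOpen_compl_iff, isOpen_iff_mem_nhds]
      intro x hx
      obtain ⟨U, hUo, hxU, hUS⟩ := hkey x
      refine Filter.mem_of_superset (hUo.mem_nhds hxU) ?_
      intro z hzU hzS
      have : z = x := Set.mem_singleton_iff.1 (hUS ⟨hzU, hzS⟩)
      subst this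
      exact hx hzS
    · refine ⟨?_, Or.inl hb⟩
      rintro ⟨v, u, h1, h2, h3⟩
      exact hnoint' ⟨u, v, h1, h2, fun y hy => h3 y hy.1 hy.2⟩
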